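/- arXiv:2305.02672 — 2 statements merged into one kernel-verified Lean document; each statement's English description precedes it below -/
import Mathlib

section
/- The sequence (d_{−1}(n))_{n≥0} of digits of φ^{−1} in the canonical φ-representations of the natural numbers has limiting frequency of 1's equal to 1/(3φ+1); that is, lim_{N→∞} (1/N)·Σ_{0 ≤ n < N} d_{−1}(n) = 1/(3φ+1). -/
/-- The golden ratio φ = (1+√5)/2. -/
noncomputable def phi : ℝ := (1 + Real.sqrt 5) / 2

/-- `a` is a finite φ-representation of the real number `x`: a finitely supported
function `a : ℤ → {0,1}` with `x = Σ_{i ∈ ℤ} a(i) · φ^i`. -/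
def IsPhiRep (x : ℝ) (a : ℤ →₀ ℕ) : Prop :=
  (∀ i, a i ≤ 1) ∧ x = ∑ i ∈ a.support, (a i : ℝ) * phi ^ i

/-- `a` is the canonical φ-representation of `x`: a finite φ-representation with
no two adjacent digits equal to 1. -/
def IsCanonRep (x : ℝ) (a : ℤ →₀ ℕ) : Prop :=
  IsPhiRep x a ∧ ∀ i : ℤ, a i * a (i + 1) = 0



set_option maxHeartbeats 1000000

noncomputable def psi : ℝ := 1 - phi
noncomputable def gx : ℝ := phi⁻¹

lemma sqrt5_pos : (0:ℝ) < Real.sqrt 5 := Real.sqrt_pos.2 (by norm_num)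
lemma sqrt5_sq : Real.sqrt 5 ^ 2 = 5 := Real.sq_sqrt (by norm_num)
lemma sqrt5_gt : (2:ℝ) < Real.sqrt 5 := by nlinarith [sqrt5_sq, sqrt5_pos]
lemma sqrt5_lt : Real.sqrt 5 < 3 := by nlinarith [sqrt5_sq, sqrt5_pos]
lemma phi_gt_one : 1 < phi := by unfold phi; nlinarith [sqrt5_gt]
lemma phi_lt_two : phi < 2 := by unfold phi; nlinarith [sqrt5_lt]
lemma phi_gt_3half : 3/2 < phi := by unfold phi; nlinarith [sqrt5_gt]
lemma phi_pos : 0 < phi := lt_trans one_pos phi_gt_one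
lemma phi_ne : phi ≠ 0 := ne_of_gt phi_pos
lemma phi_sq : phi * phi = phi + 1 := by unfold phi; nlinarith [sqrt5_sq]
lemma irr5 : Irrational (Real.sqrt 5) := (by norm_num : Nat.Prime 5).irrational_sqrt
lemma phi_irr : Irrational phi := by
  have h := (irr5.natCast_add 1).div_ratCast (q := 2) (by norm_num)
  unfold phi; convert h using 2 <;> norm_num
lemma lin_indep {A B C : ℤ} (h : (A:ℝ) + B * phi = C) : B = 0 ∧ A = C := by
  by_cases hB : B = 0
  · refine ⟨hB, ?_⟩
    subst hB; push_cast at h; exact_mod_cast (by linarith : (A:ℝ) = C)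
  · exfalso
    refine phi_irr ⟨((C : ℚ) - A) / B, ?_⟩
    have hB' : ((B:ℤ):ℝ) ≠ 0 := Int.cast_ne_zero.2 hB
    push_cast
    field_simp
    linarith
lemma psi_neg : psi < 0 := by unfold psi; linarith [phi_gt_one]
lemma psi_ne : psi ≠ 0 := ne_of_lt psi_neg
lemma psi_sq : psi * psi = psi + 1 := by unfold psi; nlinarith [phi_sq]
lemma phi_inv : phi⁻¹ = phi - 1 :=
  inv_eq_of_mul_eq_one_right (by nlinarith [phi_sq])
lemma psi_inv : psi⁻¹ = psi - 1 :=
  inv_eq_of_mul_eq_one_right (by nlinarith [psi_sq])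
lemma gx_eq : gx = phi - 1 := phi_inv
lemma gx_pos : 0 < gx := inv_pos.2 phi_pos
lemma gx_ne : gx ≠ 0 := ne_of_gt gx_pos
lemma gx_lt_one : gx < 1 := by
  unfold gx; rw [inv_lt_one_iff₀]; right; exact phi_gt_one
lemma psi_eq_neg_gx : psi = -gx := by rw [gx_eq]; unfold psi; ring
lemma gx_id : gx + gx * gx = 1 := by rw [gx_eq]; nlinarith [phi_sq]
lemma psi_def : psi = 1 - phi := rfl

lemma pair (i : ℤ) : ∃ A B : ℤ, phi^i = (A:ℝ) + B*phi ∧ psi^i = (A:ℝ) + B*psi := by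
  induction i using Int.induction_on with
  | zero => exact ⟨1, 0, by norm_num, by norm_num⟩
  | succ k ih =>
    obtain ⟨A, B, h1, h2⟩ := ih
    refine ⟨B, A + B, ?_, ?_⟩
    · rw [zpow_add_one₀ phi_ne, h1]; push_cast; linear_combination (B:ℝ) * phi_sq
    · rw [zpow_add_one₀ psi_ne, h2]; push_cast; linear_combination (B:ℝ) * psi_sq
  | pred k ih =>
    obtain ⟨A, B, h1, h2⟩ := ih
    refine ⟨B - A, A, ?_, ?_⟩
    · rw [show (-(k:ℤ) - 1) = (-k) - 1 by ring, zpow_sub_one₀ phi_ne, h1, phi_inv]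
      push_cast; linear_combination (B:ℝ) * phi_sq
    · rw [show (-(k:ℤ) - 1) = (-k) - 1 by ring, zpow_sub_one₀ psi_ne, h2, psi_inv]
      push_cast; linear_combination (B:ℝ) * psi_sq

lemma sum_pair (T : Finset ℤ) : ∃ A B : ℤ,
    (∑ i ∈ T, phi^i) = (A:ℝ) + B*phi ∧ (∑ i ∈ T, psi^i) = (A:ℝ) + B*psi := by
  classical
  induction T using Finset.induction_on with
  | empty => exact ⟨0, 0, by simp, by simp⟩
  | insert a s hnot ih =>
    obtain ⟨A, B, h1, h2⟩ := ih
    obtain ⟨C, D, g1, g2⟩ := pair a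
    exact ⟨C + A, D + B, by rw [Finset.sum_insert hnot, h1, g1]; push_cast; ring,
      by rw [Finset.sum_insert hnot, h2, g2]; push_cast; ring⟩

lemma gap_lemma (s : Finset ℤ) : ∀ (J : ℤ), (∀ i ∈ s, J ≤ i) →
    (∀ i ∈ s, ∀ j ∈ s, i < j → i + 2 ≤ j) →
    ∑ i ∈ s, gx^i < gx^(J-1) := by
  induction s using Finset.strongInduction with
  | _ s ih =>
    intro J hJ hsep
    rcases s.eq_empty_or_nonempty with rfl | hne
    · simpa using zpow_pos gx_pos (J-1)
    · set j0 := s.min' hne with hj0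
      have hmem : j0 ∈ s := s.min'_mem hne
      have hJj0 : J ≤ j0 := hJ _ hmem
      have key : ∑ i ∈ s.erase j0, gx^i < gx^(j0+2-1) := by
        refine ih _ (Finset.erase_ssubset hmem) _ ?_ ?_
        · intro i hi
          have his : i ∈ s := Finset.mem_of_mem_erase hi
          have hne' : i ≠ j0 := Finset.ne_of_mem_erase hi
          have h1 : j0 ≤ i := s.min'_le _ his
          have h2 : j0 < i := lt_of_le_of_ne h1 (Ne.symm hne')
          linarith [hsep j0 hmem i his h2]
        · intro i hi j hj hij
          exact hsep i (Finset.mem_of_mem_erase hi) j (Finset.mem_of_mem_erase hj) hij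
      rw [← Finset.add_sum_erase _ _ hmem]
      have hid : gx^j0 + gx^(j0+1) = gx^(j0-1) := by
        have h1 : gx^j0 = gx^(j0-1) * gx := by
          rw [← zpow_add_one₀ gx_ne]; ring_nf
        have h2 : gx^(j0+1) = gx^(j0-1) * (gx*gx) := by
          rw [← mul_assoc, ← zpow_add_one₀ gx_ne, ← zpow_add_one₀ gx_ne]; ring_nf
        rw [h1, h2, ← mul_add, gx_id, mul_one]
      have hmono : gx^(j0-1) ≤ gx^(J-1) :=
        zpow_le_zpow_right_of_le_one₀ gx_pos (le_of_lt gx_lt_one) (by linarith)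
      have h3 : gx^(j0+2-1) = gx^(j0+1) := by ring_nf
      rw [h3] at key
      linarith

lemma neg_sum_lt (s : Finset ℤ) (J : ℤ) (hneg : ∀ i ∈ s, i ≤ -J)
    (hsep : ∀ i ∈ s, ∀ j ∈ s, i < j → i + 2 ≤ j) :
    ∑ i ∈ s, phi^i < gx^(J-1) := by
  have hre : ∑ i ∈ s, phi^i = ∑ j ∈ s.image Neg.neg, gx^j := by
    rw [Finset.sum_image (by intro a _ b _ h; exact neg_injective h)]
    refine Finset.sum_congr rfl (fun i _ => ?_)
    unfold gx
    rw [inv_zpow, zpow_neg, inv_inv]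
  rw [hre]
  refine gap_lemma _ J ?_ ?_
  · intro j hj
    obtain ⟨i, hi, rfl⟩ := Finset.mem_image.1 hj
    linarith [hneg i hi]
  · intro i hi j hj hij
    obtain ⟨i', hi', rfl⟩ := Finset.mem_image.1 hi
    obtain ⟨j', hj', rfl⟩ := Finset.mem_image.1 hj
    linarith [hsep j' hj' i' hi' (by linarith)]

lemma psi_zpow_even {i : ℤ} (h : Even i) : psi^i = gx^i := by
  rw [psi_eq_neg_gx]; exact h.neg_zpow gx

lemma psi_zpow_odd {i : ℤ} (h : Odd i) : psi^i = -gx^i := by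
  rw [psi_eq_neg_gx]; exact h.neg_zpow gx

lemma pos_sum_psi_ub (s : Finset ℤ) (Je : ℤ) (hJe : ∀ i ∈ s, Even i → Je ≤ i)
    (hsep : ∀ i ∈ s, ∀ j ∈ s, i < j → i + 2 ≤ j) :
    ∑ i ∈ s, psi^i < gx^(Je-1) := by
  classical
  rw [← Finset.sum_filter_add_sum_filter_not s (fun i => Even i)]
  have h1 : ∑ i ∈ s.filter (fun i => Even i), psi^i < gx^(Je-1) := by
    have : ∑ i ∈ s.filter (fun i => Even i), psi^i
        = ∑ i ∈ s.filter (fun i => Even i), gx^i := by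
      refine Finset.sum_congr rfl (fun i hi => psi_zpow_even (Finset.mem_filter.1 hi).2)
    rw [this]
    refine gap_lemma _ _ (fun i hi => hJe i (Finset.mem_filter.1 hi).1 (Finset.mem_filter.1 hi).2)
      (fun i hi j hj hij => hsep i (Finset.mem_filter.1 hi).1 j (Finset.mem_filter.1 hj).1 hij)
  have h2 : ∑ i ∈ s.filter (fun i => ¬ Even i), psi^i ≤ 0 := by
    refine Finset.sum_nonpos (fun i hi => ?_)
    rw [psi_zpow_odd (Int.not_even_iff_odd.1 (Finset.mem_filter.1 hi).2)]
    simp [le_of_lt (zpow_pos gx_pos i)]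
  linarith

lemma pos_sum_psi_lb (s : Finset ℤ) (Jo : ℤ) (hJo : ∀ i ∈ s, Odd i → Jo ≤ i)
    (hsep : ∀ i ∈ s, ∀ j ∈ s, i < j → i + 2 ≤ j) :
    -gx^(Jo-1) < ∑ i ∈ s, psi^i := by
  classical
  rw [← Finset.sum_filter_add_sum_filter_not s (fun i => Odd i)]
  have h1 : ∑ i ∈ s.filter (fun i => Odd i), psi^i > -gx^(Jo-1) := by
    have : ∑ i ∈ s.filter (fun i => Odd i), psi^i
        = -∑ i ∈ s.filter (fun i => Odd i), gx^i := by
      rw [← Finset.sum_neg_distrib]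
      refine Finset.sum_congr rfl (fun i hi => psi_zpow_odd (Finset.mem_filter.1 hi).2)
    rw [this]
    have := gap_lemma (s.filter (fun i => Odd i)) Jo
      (fun i hi => hJo i (Finset.mem_filter.1 hi).1 (Finset.mem_filter.1 hi).2)
      (fun i hi j hj hij => hsep i (Finset.mem_filter.1 hi).1 j (Finset.mem_filter.1 hj).1 hij)
    linarith
  have h2 : 0 ≤ ∑ i ∈ s.filter (fun i => ¬ Odd i), psi^i := by
    refine Finset.sum_nonneg (fun i hi => ?_)
    rw [psi_zpow_even (Int.not_odd_iff_even.1 (Finset.mem_filter.1 hi).2)]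
    exact le_of_lt (zpow_pos gx_pos i)
  linarith

def InB (n : ℕ) : Prop := ∃ j b : ℤ, 1 ≤ j ∧ 1 ≤ b ∧ (b:ℝ) < j*phi ∧ (j:ℝ)*phi < b+1
    ∧ (n:ℤ) = 3*b + j + 1

lemma b_sandwich {m b1 b2 : ℤ} (h1 : (b1:ℝ) < m*phi) (h1' : (m:ℝ)*phi < b1+1)
    (h2 : (b2:ℝ) < m*phi) (h2' : (m:ℝ)*phi < b2+1) : b1 = b2 := by
  have k1 : (b1:ℝ) < b2+1 := lt_trans h1 h2'
  have k2 : (b2:ℝ) < b1+1 := lt_trans h2 h1'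
  have k1' : b1 < b2+1 := by exact_mod_cast k1
  have k2' : b2 < b1+1 := by exact_mod_cast k2
  omega

lemma G_mono {m1 b1 m2 b2 : ℤ} (h1 : (b1:ℝ) < m1*phi) (h1' : (m1:ℝ)*phi < b1+1)
    (h2 : (b2:ℝ) < m2*phi) (h2' : (m2:ℝ)*phi < b2+1) (hm : m1 < m2) :
    2*b1 - m1 + 1 + (m2 - m1) ≤ 2*b2 - m2 + 1 := by
  have key : b1 + (m2 - m1) ≤ b2 := by
    have hd' : (1:ℤ) ≤ m2 - m1 := by omega
    have hd : (1:ℝ) ≤ ((m2 - m1 : ℤ):ℝ) := by exact_mod_cast hd'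
    have hr : ((b1 + (m2 - m1) : ℤ):ℝ) < (b2:ℝ) + 1 := by
      push_cast
      push_cast at hd
      nlinarith [phi_gt_one]
    have := (by exact_mod_cast hr : b1 + (m2 - m1) < b2 + 1)
    omega
  omega

lemma branch_one (n : ℕ) (p q : ℤ) (Y Xb : ℝ)
    (e1 : Y = p + q*phi) (e2 : (p:ℝ) + q*psi = n - Xb)
    (e3 : gx ≤ Y) (e4 : Y < 1) (e5 : -1 < Xb) (e6 : Xb < phi - 1) : InB n := by
  rw [psi_def] at e2
  have hgx := gx_eq
  have hn0 : (0:ℝ) ≤ n := Nat.cast_nonneg n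
  -- q ≤ -1
  have hq : q ≤ -1 := by
    by_contra hc
    push_neg at hc
    have hq0 : 0 ≤ q := by omega
    rcases eq_or_lt_of_le hq0 with hq0' | hq1
    · -- q = 0
      have : Y = p := by rw [e1, ← hq0']; push_cast; ring
      have hp1 : (0:ℝ) < p := by rw [← this]; linarith [phi_gt_one]
      have hp2 : (p:ℝ) < 1 := by rw [← this]; exact e4
      have : (0:ℤ) < p := by exact_mod_cast hp1
      have : p < 1 := by exact_mod_cast hp2
      omega
    · have hq1' : (1:ℝ) ≤ q := by exact_mod_cast hq1
      nlinarith [phi_gt_one]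
  set m : ℤ := -q with hmdef
  clear_value m
  have hm1 : 1 ≤ m := by omega
  have hm1' : (1:ℝ) ≤ m := by exact_mod_cast hm1
  set b : ℤ := p - 1 with hbdef
  clear_value b
  have hmq : (m:ℝ) = -(q:ℝ) := by simp only [hmdef]; push_cast; ring
  have hbr : (b:ℝ) = (p:ℝ) - 1 := by simp only [hbdef]; push_cast; ring
  have hYm : Y = (p:ℝ) - m*phi := by rw [e1, hmq]; ring
  have hY0 : 0 < Y := lt_of_lt_of_le (by rw [hgx]; linarith [phi_gt_one]) e3
  have hb1 : (b:ℝ) < m*phi := by rw [hbr]; linarith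
  have hb2 : (m:ℝ)*phi < b+1 := by rw [hbr]; linarith
  set f : ℝ := m*phi - b with hfdef
  clear_value f
  have hf0 : 0 < f := by simp only [hfdef]; linarith
  have hf1 : f < 1 := by simp only [hfdef]; linarith
  have hYf : Y = 1 - f := by simp only [hfdef]; rw [hbr]; linarith [hYm]
  have hfle : f ≤ 2 - phi := by rw [hgx] at e3; linarith
  have hfne : f ≠ 2 - phi := by
    intro he
    have : ((b + 2 : ℤ):ℝ) + (-(m+1) : ℤ) * phi = ((0:ℤ):ℝ) := by
      push_cast
      simp only [hfdef] at he
      linarith [he]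
    have := (lin_indep this).1
    omega
  have hflt : f < 2 - phi := lt_of_le_of_ne hfle hfne
  set G : ℤ := 2*b - m + 1 with hGdef
  clear_value G
  have hyG : (p:ℝ) + q*(1 - phi) = G + f := by
    simp only [hGdef, hfdef, hbdef, hmdef]; push_cast; ring
  have bound1 : (G:ℝ) + f < n + 1 := by rw [← hyG, e2]; linarith
  have bound2 : (n:ℝ) + 1 - phi < G + f := by rw [← hyG, e2]; linarith
  have hGn : G = n := by
    have hub : G ≤ n := by
      have : (G:ℝ) < n + 1 := by linarith
      have : G < (n:ℤ) + 1 := by exact_mod_cast this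
      omega
    have hlb : (n:ℤ) ≤ G := by
      by_contra hc
      push_neg at hc
      have : (G:ℝ) ≤ (n:ℝ) - 1 := by
        have : G ≤ (n:ℤ) - 1 := by omega
        exact_mod_cast this
      linarith
    omega
  refine ⟨2*m - b, b - m, ?_, ?_, ?_, ?_, ?_⟩
  · -- 1 ≤ 2m - b
    have : (b:ℝ) < 2*m := by nlinarith [phi_lt_two, hb1, hm1']
    have : b < 2*m := by exact_mod_cast this
    omega
  · -- 1 ≤ b - m
    have : ((m:ℤ):ℝ) < b := by nlinarith [phi_gt_3half, hb2, hm1', hflt, hb1]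
    have : m < b := by exact_mod_cast this
    omega
  · -- (b-m : ℝ) < (2m-b)*phi
    have hjphi : ((2*m - b : ℤ):ℝ)*phi = ((b - m : ℤ):ℝ) + f*(1+phi) := by
      push_cast; simp only [hfdef]; push_cast; linear_combination (-(m:ℝ))*phi_sq
    rw [hjphi]
    nlinarith [phi_gt_one, hf0]
  · -- (2m-b)*phi < (b-m)+1
    have hjphi : ((2*m - b : ℤ):ℝ)*phi = ((b - m : ℤ):ℝ) + f*(1+phi) := by
      push_cast; simp only [hfdef]; push_cast; linear_combination (-(m:ℝ))*phi_sq
    have e0 : (2-phi)*(1+phi) = 1 := by linear_combination (-1:ℝ)*phi_sq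
    have key : f*(1+phi) < 1 := by
      calc f*(1+phi) < (2-phi)*(1+phi) := by
              apply mul_lt_mul_of_pos_right hflt; linarith [phi_gt_one]
        _ = 1 := e0
    rw [hjphi]
    linarith [key]
  · simp only [hGdef, hbdef, hmdef] at hGn
    omega

lemma branch_zero (n : ℕ) (p q : ℤ) (Y Xb : ℝ)
    (e1 : Y = p + q*phi) (e2 : (p:ℝ) + q*psi = n - Xb)
    (e0 : 0 ≤ Y) (e3 : Y < gx) (e5 : -1 < Xb) (e6 : Xb < phi) : ¬ InB n := by
  rintro ⟨j, bb, hj1, hbb1, hB1, hB2, heqn⟩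
  rw [psi_def] at e2
  have hgx := gx_eq
  have hj1' : (1:ℝ) ≤ j := by exact_mod_cast hj1
  have hbb1' : (1:ℝ) ≤ bb := by exact_mod_cast hbb1
  have hn5 : 5 ≤ (n:ℤ) := by omega
  have hn5' : (5:ℝ) ≤ n := by exact_mod_cast hn5
  -- q ≤ -1
  have hq : q ≤ -1 := by
    by_contra hc
    push_neg at hc
    have hq0' : (0:ℝ) ≤ q := by exact_mod_cast (by omega : (0:ℤ) ≤ q)
    nlinarith [phi_gt_one, phi_lt_two]
  set m : ℤ := -q with hmdef
  clear_value m
  have hm1 : 1 ≤ m := by omega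
  have hm1' : (1:ℝ) ≤ m := by exact_mod_cast hm1
  have hmq : (m:ℝ) = -(q:ℝ) := by simp only [hmdef]; push_cast; ring
  have hYm : Y = (p:ℝ) - m*phi := by rw [e1, hmq]; ring
  -- Y > 0
  have hY0 : 0 < Y := by
    rcases lt_or_eq_of_le e0 with h | h
    · exact h
    · exfalso
      have hz : ((-p : ℤ):ℝ) + (m : ℤ) * phi = ((0:ℤ):ℝ) := by push_cast; linarith [hYm]
      have := (lin_indep hz).1
      omega
  set b : ℤ := p - 1 with hbdef
  clear_value b
  have hbr : (b:ℝ) = (p:ℝ) - 1 := by simp only [hbdef]; push_cast; ring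
  have hb1 : (b:ℝ) < m*phi := by rw [hbr]; nlinarith [e3, hgx, phi_lt_two, hYm]
  have hb2 : (m:ℝ)*phi < b+1 := by rw [hbr]; linarith [hYm, hY0]
  set f : ℝ := m*phi - b with hfdef
  clear_value f
  have hf0 : 0 < f := by simp only [hfdef]; linarith
  have hf1 : f < 1 := by simp only [hfdef]; linarith
  have hYf : Y = 1 - f := by simp only [hfdef]; rw [hbr]; linarith [hYm]
  have hfgt : 2 - phi < f := by rw [hgx] at e3; linarith
  set G : ℤ := 2*b - m + 1 with hGdef
  clear_value G
  have hyG : (p:ℝ) + q*(1 - phi) = G + f := by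
    simp only [hGdef, hfdef, hbdef, hmdef]; push_cast; ring
  have bound1 : (G:ℝ) + f < n + 1 := by rw [← hyG, e2]; linarith
  have bound2 : (n:ℝ) - phi < G + f := by rw [← hyG, e2]; linarith
  have hGub : G ≤ (n:ℤ) := by
    have h : (G:ℝ) < n + 1 := by linarith
    have : G < (n:ℤ) + 1 := by exact_mod_cast h
    omega
  have hGlb : (n:ℤ) - 2 ≤ G := by
    have h : (n:ℝ) - 3 < G := by linarith [phi_lt_two, hf1]
    have : (n:ℤ) - 3 < G := by exact_mod_cast h
    omega
  -- data from InB
  set m' : ℤ := bb + j with hm'def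
  clear_value m'
  set b' : ℤ := 2*bb + j with hb'def
  clear_value b'
  set f' : ℝ := j*phi - bb with hf'def
  clear_value f'
  have hf'0 : 0 < f' := by simp only [hf'def]; linarith
  have hf'1 : f' < 1 := by simp only [hf'def]; linarith
  have hm'val : (m':ℝ)*phi = b' + f'*(2-phi) := by
    simp only [hm'def, hb'def, hf'def]; push_cast; linear_combination (j:ℝ)*phi_sq
  have hsmall0 : 0 < f'*(2-phi) := by nlinarith [phi_lt_two]
  have hsmall1 : f'*(2-phi) < 2-phi := by nlinarith [phi_lt_two]
  have hm'1 : (b':ℝ) < m'*phi := by rw [hm'val]; linarith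
  have hm'2 : (m':ℝ)*phi < b'+1 := by rw [hm'val]; nlinarith [phi_gt_one]
  have hG' : 2*b' - m' + 1 = (n:ℤ) := by simp only [hb'def, hm'def]; omega
  -- trichotomy
  rcases lt_trichotomy m m' with hlt | heq | hgt
  · -- m < m' : use m'' = m'-1, b'' = b'-2
    have hm''1 : ((b' - 2 : ℤ):ℝ) < (m' - 1 : ℤ)*phi := by
      push_cast
      rw [show ((m':ℝ) - 1)*phi = (m':ℝ)*phi - phi by ring, hm'val]
      linarith [phi_lt_two, hsmall0]
    have hm''2 : ((m' - 1 : ℤ):ℝ)*phi < (b' - 2 : ℤ)+1 := by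
      push_cast
      rw [show ((m':ℝ) - 1)*phi = (m':ℝ)*phi - phi by ring, hm'val]
      nlinarith [phi_gt_3half, hsmall1]
    rcases lt_or_eq_of_le (by omega : m ≤ m' - 1) with hlt2 | heq2
    · have := G_mono hb1 hb2 hm''1 hm''2 hlt2
      simp only [hGdef] at *
      omega
    · have := b_sandwich (heq2 ▸ hb1) (heq2 ▸ hb2) hm''1 hm''2
      -- b = b' - 2, m = m' - 1 ⇒ G = n - 3, contra G ≥ n - 2
      simp only [hGdef] at *
      omega
  · -- m = m'
    have hbeq : b = b' := b_sandwich (heq ▸ hb1) (heq ▸ hb2) hm'1 hm'2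
    have : f = f'*(2-phi) := by
      have h1 : (m:ℝ)*phi = b + f := by simp only [hfdef]; ring
      have h2 : (m:ℝ)*phi = b + f'*(2-phi) := by
        rw [show (m:ℝ) = (m':ℝ) by rw [heq], hm'val, hbeq]
      linarith
    linarith [hsmall1, hfgt]
  · -- m' < m
    have := G_mono hm'1 hm'2 hb1 hb2 hgt
    simp only [hGdef] at *
    omega

lemma gx_zpow_neg_one : gx^(-1:ℤ) = phi := by
  rw [zpow_neg_one]; unfold gx; rw [inv_inv]

lemma phi_zpow_neg_one : phi^(-1:ℤ) = gx := by
  rw [zpow_neg_one]; rfl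

lemma dichotomy (n : ℕ) (a : ℤ →₀ ℕ) (h : IsCanonRep n a) :
    (a (-1) = 1 → InB n) ∧ (a (-1) = 0 → ¬ InB n) := by
  classical
  obtain ⟨⟨hle, hsum⟩, hcanon⟩ := h
  set T := a.support with hT
  have hone : ∀ i ∈ T, a i = 1 := by
    intro i hi
    have h1 := hle i
    have h2 : a i ≠ 0 := Finsupp.mem_support_iff.1 hi
    omega
  have hsum' : (n:ℝ) = ∑ i ∈ T, phi^i := by
    rw [hsum]
    refine Finset.sum_congr rfl (fun i hi => ?_)
    rw [hone i hi]; norm_num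
  have hsep : ∀ i ∈ T, ∀ j ∈ T, i < j → i + 2 ≤ j := by
    intro i hi j hj hij
    by_contra hc
    push_neg at hc
    have : j = i + 1 := by omega
    subst this
    have := hcanon i
    rw [hone i hi, hone _ hj] at this
    omega
  set Tneg := T.filter (fun i => i < 0) with hTneg
  set Tpos := T.filter (fun i => ¬ i < 0) with hTpos
  have hsepneg : ∀ i ∈ Tneg, ∀ j ∈ Tneg, i < j → i + 2 ≤ j := fun i hi j hj =>
    hsep i (Finset.mem_filter.1 hi).1 j (Finset.mem_filter.1 hj).1
  have hseppos : ∀ i ∈ Tpos, ∀ j ∈ Tpos, i < j → i + 2 ≤ j := fun i hi j hj =>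
    hsep i (Finset.mem_filter.1 hi).1 j (Finset.mem_filter.1 hj).1
  obtain ⟨p, q, hY1, hY2⟩ := sum_pair Tneg
  obtain ⟨P, Q, hX1, hX2⟩ := sum_pair Tpos
  have hsplit : ∑ i ∈ T, phi^i = (∑ i ∈ Tneg, phi^i) + (∑ i ∈ Tpos, phi^i) :=
    (Finset.sum_filter_add_sum_filter_not T _ _).symm
  have hlin : ((p + P : ℤ):ℝ) + ((q + Q : ℤ):ℝ) * phi = ((n:ℤ):ℝ) := by
    push_cast
    rw [hsum', hsplit, hY1, hX1]
    push_cast; ring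
  obtain ⟨hQ0, hPn⟩ := lin_indep hlin
  have e1 : (∑ i ∈ Tneg, phi^i) = (p:ℝ) + q*phi := hY1
  have e2 : (p:ℝ) + q*psi = n - (∑ i ∈ Tpos, psi^i) := by
    rw [hX2]
    have h1 : (P:ℝ) = n - p := by exact_mod_cast congrArg (Int.cast : ℤ → ℝ) (by omega : P = n - p)
    have h2 : (Q:ℝ) = -q := by exact_mod_cast congrArg (Int.cast : ℤ → ℝ) (by omega : Q = -q)
    rw [h1, h2]; ring
  have hY0 : 0 ≤ (∑ i ∈ Tneg, phi^i) := Finset.sum_nonneg (fun i _ => le_of_lt (zpow_pos phi_pos i))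
  have hYlt1 : (∑ i ∈ Tneg, phi^i) < 1 := by
    have := neg_sum_lt Tneg 1 (fun i hi => by
      have := (Finset.mem_filter.1 hi).2; omega) hsepneg
    simpa using this
  have hXub : (∑ i ∈ Tpos, psi^i) < phi := by
    have := pos_sum_psi_ub Tpos 0 (fun i hi _ => by
      have := (Finset.mem_filter.1 hi).2; omega) hseppos
    rw [show (0:ℤ)-1 = -1 by ring, gx_zpow_neg_one] at this
    exact this
  have hXlb : -1 < (∑ i ∈ Tpos, psi^i) := by
    have := pos_sum_psi_lb Tpos 1 (fun i hi hodd => by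
      have h0 : ¬ i < 0 := (Finset.mem_filter.1 hi).2
      rcases hodd with ⟨k, hk⟩
      omega) hseppos
    simpa using this
  constructor
  · intro hd1
    have hmem : (-1:ℤ) ∈ Tneg := by
      rw [hTneg, Finset.mem_filter]
      exact ⟨Finsupp.mem_support_iff.2 (by rw [hd1]; norm_num), by norm_num⟩
    have hYgx : gx ≤ (∑ i ∈ Tneg, phi^i) := by
      have h2 : phi^(-1:ℤ) ≤ (∑ i ∈ Tneg, phi^i) := by
        simpa using Finset.single_le_sum (f := fun i => phi^i)
          (fun i _ => le_of_lt (zpow_pos phi_pos i)) hmem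
      rw [phi_zpow_neg_one] at h2
      exact h2
    have h0T : (0:ℤ) ∉ T := by
      have hcc := hcanon (-1)
      rw [hd1, one_mul, show (-1:ℤ)+1 = 0 by ring] at hcc
      intro hc
      exact Finsupp.mem_support_iff.1 hc hcc
    have hXub' : (∑ i ∈ Tpos, psi^i) < phi - 1 := by
      have := pos_sum_psi_ub Tpos 2 (fun i hi heven => by
        have h0 : ¬ i < 0 := (Finset.mem_filter.1 hi).2
        have hiT : i ∈ T := (Finset.mem_filter.1 hi).1
        have : i ≠ 0 := fun hc => h0T (hc ▸ hiT)
        rcases heven with ⟨k, hk⟩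
        omega) hseppos
      rw [show (2:ℤ)-1 = 1 by ring, zpow_one, gx_eq] at this
      exact this
    exact branch_one n p q _ _ e1 e2 hYgx hYlt1 hXlb hXub'
  · intro hd0
    have hYlt : (∑ i ∈ Tneg, phi^i) < gx := by
      have := neg_sum_lt Tneg 2 (fun i hi => by
        have hi0 := (Finset.mem_filter.1 hi).2
        have hiT : i ∈ T := (Finset.mem_filter.1 hi).1
        have : i ≠ -1 := by
          intro hc
          subst hc
          exact Finsupp.mem_support_iff.1 hiT hd0
        omega) hsepneg
      rw [show (2:ℤ)-1 = 1 by ring, zpow_one] at this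
      exact this
    exact branch_zero n p q _ _ e1 e2 hY0 hYlt hXlb hXub

noncomputable def Bf : ℕ → ℤ := fun j => 3*⌊(j:ℝ)*phi⌋ + j + 1
noncomputable def BN : ℕ → ℕ := fun j => (Bf j).toNat

lemma floor_lt_self_mul (j : ℕ) (hj : 1 ≤ j) : (⌊(j:ℝ)*phi⌋ : ℝ) < (j:ℝ)*phi := by
  rcases lt_or_eq_of_le (Int.floor_le ((j:ℝ)*phi)) with h | h
  · exact h
  · exfalso
    have hz : ((-⌊(j:ℝ)*phi⌋ : ℤ):ℝ) + ((j:ℤ):ℝ) * phi = ((0:ℤ):ℝ) := by push_cast; linarith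
    have := (lin_indep hz).1
    omega

lemma floor_ge_one (j : ℕ) (hj : 1 ≤ j) : 1 ≤ ⌊(j:ℝ)*phi⌋ := by
  rw [Int.le_floor]
  have : (1:ℝ) ≤ j := by exact_mod_cast hj
  push_cast
  nlinarith [phi_gt_one]

lemma InB_iff (n : ℕ) : InB n ↔ ∃ j : ℕ, 1 ≤ j ∧ n = BN j := by
  constructor
  · rintro ⟨j, b, hj, hb, h1, h2, heq⟩
    refine ⟨j.toNat, by omega, ?_⟩
    have hjj : ((j.toNat : ℕ):ℝ) = (j:ℝ) := by
      exact_mod_cast Int.toNat_of_nonneg (by omega : (0:ℤ) ≤ j)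
    have hfl : ⌊((j.toNat : ℕ):ℝ)*phi⌋ = b := by
      rw [hjj]
      exact Int.floor_eq_iff.2 ⟨le_of_lt h1, h2⟩
    have : Bf j.toNat = (n:ℤ) := by
      unfold Bf
      rw [hfl]
      omega
    unfold BN
    omega
  · rintro ⟨j, hj, rfl⟩
    have h1 : (⌊(j:ℝ)*phi⌋ : ℝ) < (j:ℝ)*phi := floor_lt_self_mul j hj
    have h2 : (j:ℝ)*phi < ⌊(j:ℝ)*phi⌋ + 1 := Int.lt_floor_add_one _
    have hb1 : 1 ≤ ⌊(j:ℝ)*phi⌋ := floor_ge_one j hj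
    refine ⟨(j:ℤ), ⌊(j:ℝ)*phi⌋, by omega, hb1, by push_cast; exact_mod_cast h1,
      by push_cast; exact_mod_cast h2, ?_⟩
    unfold BN Bf
    have hnn : 0 ≤ 3*⌊(j:ℝ)*phi⌋ + (j:ℤ) + 1 := by omega
    omega

lemma Bf_mono : ∀ {j j' : ℕ}, j < j' → Bf j < Bf j' := by
  intro j j' h
  unfold Bf
  have h1 : ⌊(j:ℝ)*phi⌋ ≤ ⌊(j':ℝ)*phi⌋ := by
    apply Int.floor_le_floor
    have : (j:ℝ) ≤ j' := by exact_mod_cast le_of_lt h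
    nlinarith [phi_pos]
  omega

lemma BN_lower (j : ℕ) (hj : 1 ≤ j) : (j:ℝ)*(3*phi+1) - 2 < (BN j : ℝ) := by
  have h2 : (j:ℝ)*phi < ⌊(j:ℝ)*phi⌋ + 1 := Int.lt_floor_add_one _
  have hnn : 0 ≤ Bf j := by unfold Bf; have := floor_ge_one j hj; omega
  have : (BN j : ℝ) = ((Bf j : ℤ) : ℝ) := by
    unfold BN; exact_mod_cast Int.toNat_of_nonneg hnn
  rw [this]
  unfold Bf
  push_cast
  nlinarith

lemma BN_upper (j : ℕ) (hj : 1 ≤ j) : (BN j : ℝ) ≤ (j:ℝ)*(3*phi+1) + 1 := by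
  have h1 : (⌊(j:ℝ)*phi⌋ : ℝ) ≤ (j:ℝ)*phi := Int.floor_le _
  have hnn : 0 ≤ Bf j := by unfold Bf; have := floor_ge_one j hj; omega
  have : (BN j : ℝ) = ((Bf j : ℤ) : ℝ) := by
    unfold BN; exact_mod_cast Int.toNat_of_nonneg hnn
  rw [this]
  unfold Bf
  push_cast
  nlinarith

open Finset in
lemma count_eq (N : ℕ) [DecidablePred InB] :
    ((range N).filter (fun n => InB n)).card
      = ((Icc 1 N).filter (fun j => BN j < N)).card := by
  classical
  refine (Finset.card_bij (fun j _ => BN j) ?_ ?_ ?_).symm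
  · intro j hj
    simp only [mem_filter, mem_Icc] at hj
    simp only [mem_filter, mem_range]
    exact ⟨hj.2, (InB_iff (BN j)).2 ⟨j, hj.1.1, rfl⟩⟩
  · intro j hj j' hj' heq
    simp only [mem_filter, mem_Icc] at hj hj'
    have h1 : 0 ≤ Bf j := by unfold Bf; have := floor_ge_one j hj.1.1; omega
    have h2 : 0 ≤ Bf j' := by unfold Bf; have := floor_ge_one j' hj'.1.1; omega
    by_contra hne
    rcases lt_or_gt_of_ne hne with h | h
    · have := Bf_mono h
      unfold BN at heq; omega
    · have := Bf_mono h
      unfold BN at heq; omega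
  · intro n hn
    simp only [mem_filter, mem_range] at hn
    obtain ⟨j, hj1, rfl⟩ := (InB_iff n).1 hn.2
    refine ⟨j, ?_, rfl⟩
    simp only [mem_filter, mem_Icc]
    have hge : j ≤ BN j := by
      unfold BN Bf
      have := floor_ge_one j hj1
      omega
    exact ⟨⟨hj1, by omega⟩, hn.1⟩

lemma K_upper (N : ℕ) [DecidablePred InB] :
    (((Finset.Icc 1 N).filter (fun j => BN j < N)).card : ℝ) ≤ ((N:ℝ)+2)/(3*phi+1) := by
  set c : ℝ := 3*phi+1 with hc
  have hcpos : 0 < c := by rw [hc]; nlinarith [phi_gt_one]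
  set M' : ℕ := (⌊((N:ℝ)+2)/c⌋).toNat with hM'
  have hsub : (Finset.Icc 1 N).filter (fun j => BN j < N) ⊆ Finset.Icc 1 M' := by
    intro j hj
    simp only [Finset.mem_filter, Finset.mem_Icc] at hj
    have hb := BN_lower j hj.1.1
    have hlt : (j:ℝ) < ((N:ℝ)+2)/c := by
      rw [lt_div_iff₀ hcpos]
      have : (BN j : ℝ) < N := by exact_mod_cast hj.2
      rw [hc]; nlinarith [hb]
    have hle : (j:ℤ) ≤ ⌊((N:ℝ)+2)/c⌋ := Int.le_floor.2 (by exact_mod_cast le_of_lt hlt)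
    simp only [Finset.mem_Icc]
    constructor
    · exact hj.1.1
    · omega
  calc (((Finset.Icc 1 N).filter (fun j => BN j < N)).card : ℝ)
      ≤ ((Finset.Icc 1 M').card : ℝ) := by exact_mod_cast Finset.card_le_card hsub
    _ = (M' : ℝ) := by rw [Nat.card_Icc]; simp
    _ ≤ ((N:ℝ)+2)/c := by
        have hnn : (0:ℝ) ≤ ((N:ℝ)+2)/c := by positivity
        have : (⌊((N:ℝ)+2)/c⌋ : ℝ) ≤ ((N:ℝ)+2)/c := Int.floor_le _
        have h0 : (0:ℤ) ≤ ⌊((N:ℝ)+2)/c⌋ := Int.floor_nonneg.2 hnn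
        rw [hM']
        rw [show ((((⌊((N:ℝ)+2)/c⌋).toNat : ℕ)):ℝ) = ((⌊((N:ℝ)+2)/c⌋ : ℤ):ℝ) by
          exact_mod_cast Int.toNat_of_nonneg h0]
        exact this

lemma K_lower (N : ℕ) (hN : 2 ≤ N) [DecidablePred InB] :
    ((N:ℝ)-2)/(3*phi+1) - 1 ≤ (((Finset.Icc 1 N).filter (fun j => BN j < N)).card : ℝ) := by
  set c : ℝ := 3*phi+1 with hc
  have hcpos : 0 < c := by rw [hc]; nlinarith [phi_gt_one]
  have hc1 : 1 ≤ c := by rw [hc]; nlinarith [phi_gt_one]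
  have hxnn : (0:ℝ) ≤ ((N:ℝ)-2)/c := by
    apply div_nonneg _ (le_of_lt hcpos)
    have : (2:ℝ) ≤ N := by exact_mod_cast hN
    linarith
  set M : ℕ := (⌊((N:ℝ)-2)/c⌋).toNat with hM
  have h0 : (0:ℤ) ≤ ⌊((N:ℝ)-2)/c⌋ := Int.floor_nonneg.2 hxnn
  have hMr : (M:ℝ) = ((⌊((N:ℝ)-2)/c⌋ : ℤ):ℝ) := by
    rw [hM]; exact_mod_cast Int.toNat_of_nonneg h0
  have hMle : (M:ℝ) ≤ ((N:ℝ)-2)/c := by rw [hMr]; exact Int.floor_le _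
  have hsub : Finset.Icc 1 M ⊆ (Finset.Icc 1 N).filter (fun j => BN j < N) := by
    intro j hj
    simp only [Finset.mem_Icc] at hj
    have hjM : (j:ℝ) ≤ M := by exact_mod_cast hj.2
    have hjc : (j:ℝ)*c ≤ (N:ℝ)-2 := by
      have : (j:ℝ) ≤ ((N:ℝ)-2)/c := le_trans hjM hMle
      rw [← le_div_iff₀ hcpos]
      exact this
    have hBu := BN_upper j hj.1
    have hBN : (BN j : ℝ) < N := by rw [hc] at hjc; nlinarith
    simp only [Finset.mem_filter, Finset.mem_Icc]
    refine ⟨⟨hj.1, ?_⟩, by exact_mod_cast hBN⟩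
    have hj1 : (1:ℝ) ≤ j := by exact_mod_cast hj.1
    have : (j:ℝ) ≤ (N:ℝ) - 2 := by nlinarith
    have : (j:ℝ) ≤ (N:ℝ) := by linarith
    exact_mod_cast this
  calc ((N:ℝ)-2)/c - 1 ≤ (M:ℝ) := by
        rw [hMr]; linarith [Int.sub_one_lt_floor (((N:ℝ)-2)/c)]
    _ = ((Finset.Icc 1 M).card : ℝ) := by rw [Nat.card_Icc]; simp
    _ ≤ _ := by exact_mod_cast Finset.card_le_card hsub

/-- The limiting frequency of 1's in the sequence `(d_{-1}(n))_{n ≥ 0}` is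
`1/(3φ+1)`. Here `d n` denotes the canonical φ-representation of `n`. -/
theorem dminus1_limiting_frequency
    (d : ℕ → ℤ →₀ ℕ) (hd : ∀ n : ℕ, IsCanonRep n (d n)) :
    Filter.Tendsto
      (fun N : ℕ => (1 / (N : ℝ)) * ∑ n ∈ Finset.range N, (d n (-1) : ℝ))
      Filter.atTop (nhds (1 / (3 * phi + 1))) := by
  classical
  set c : ℝ := 3*phi+1 with hc
  have hcpos : 0 < c := by rw [hc]; nlinarith [phi_gt_one]
  have hcne : c ≠ 0 := ne_of_gt hcpos
  have hchar : ∀ n : ℕ, ((d n (-1) : ℝ)) = if InB n then 1 else 0 := by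
    intro n
    have h := dichotomy n (d n) (hd n)
    have hle := (hd n).1.1 (-1)
    rcases Nat.le_one_iff_eq_zero_or_eq_one.1 hle with h0 | h1
    · rw [if_neg (h.2 h0), h0]; norm_num
    · rw [if_pos (h.1 h1), h1]; norm_num
  have hsum : ∀ N : ℕ, ∑ n ∈ Finset.range N, ((d n (-1)):ℝ)
      = (((Finset.Icc 1 N).filter (fun j => BN j < N)).card : ℝ) := by
    intro N
    rw [← count_eq N]
    rw [Finset.sum_congr rfl (fun n _ => hchar n)]
    rw [Finset.sum_boole]
  set K : ℕ → ℕ := fun N => ((Finset.Icc 1 N).filter (fun j => BN j < N)).card with hK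
  have heq : (fun N : ℕ => (1 / (N : ℝ)) * ∑ n ∈ Finset.range N, (d n (-1) : ℝ))
      = fun N : ℕ => (K N : ℝ) / N := by
    funext N
    rw [hsum N]
    ring
  rw [heq]
  have hlo : Filter.Tendsto (fun N : ℕ => (((N:ℝ)-2)/c - 1)/N) Filter.atTop (nhds (1/c)) := by
    have h1 : Filter.Tendsto (fun N : ℕ => 1/c - (2/c+1)*(1/(N:ℝ))) Filter.atTop
        (nhds (1/c - (2/c+1)*0)) :=
      tendsto_const_nhds.sub (tendsto_const_nhds.mul tendsto_one_div_atTop_nhds_zero_nat)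
    rw [mul_zero, sub_zero] at h1
    apply h1.congr'
    filter_upwards [Filter.eventually_atTop.2 ⟨1, fun N hN => hN⟩] with N hN
    have hNne : (N:ℝ) ≠ 0 := by
      have : (1:ℝ) ≤ N := by exact_mod_cast hN
      linarith
    field_simp
    ring
  have hhi : Filter.Tendsto (fun N : ℕ => (((N:ℝ)+2)/c)/N) Filter.atTop (nhds (1/c)) := by
    have h1 : Filter.Tendsto (fun N : ℕ => 1/c + (2/c)*(1/(N:ℝ))) Filter.atTop
        (nhds (1/c + (2/c)*0)) :=
      tendsto_const_nhds.add (tendsto_const_nhds.mul tendsto_one_div_atTop_nhds_zero_nat)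
    rw [mul_zero, add_zero] at h1
    apply h1.congr'
    filter_upwards [Filter.eventually_atTop.2 ⟨1, fun N hN => hN⟩] with N hN
    have hNne : (N:ℝ) ≠ 0 := by
      have : (1:ℝ) ≤ N := by exact_mod_cast hN
      linarith
    field_simp
  refine tendsto_of_tendsto_of_tendsto_of_le_of_le' hlo hhi ?_ ?_
  · filter_upwards [Filter.eventually_atTop.2 ⟨2, fun N hN => hN⟩] with N hN
    have hNpos : (0:ℝ) < N := by
      have : (2:ℝ) ≤ N := by exact_mod_cast hN
      linarith
    exact (div_le_div_iff_of_pos_right hNpos).2 (K_lower N hN)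
  · filter_upwards [Filter.eventually_atTop.2 ⟨2, fun N hN => hN⟩] with N hN
    have hNpos : (0:ℝ) < N := by
      have : (2:ℝ) ≤ N := by exact_mod_cast hN
      linarith
    exact (div_le_div_iff_of_pos_right hNpos).2 (K_upper N)
end

section
/- For every natural number n ≥ 1, the following are equivalent: (a) there exists a finite φ-representation a of n with a(1) = a(0) = 1, a(−1) = 0, and a(i)·a(i+1) = 0 for every i ∈ ℤ with i ≠ 0 (i.e., n admits a Dekking–Van Loon expansion that differs from its canonical φ-representation); (b) there exists an integer m ≥ 1 with n = ⌊(φ+2)·m⌋. -/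
open goldenRatio

namespace DVL


local notation "Φ" => Real.goldenRatio
local notation "Ψ" => Real.goldenConj

lemma phi_eq : phi = Φ := rfl

lemma one_le_gold : (1:ℝ) ≤ Φ := le_of_lt Real.one_lt_goldenRatio

lemma psi_eq_neg_inv : Ψ = -Φ⁻¹ := by rw [Real.inv_goldenRatio]; ring

lemma psi_ne : Ψ ≠ 0 := Real.goldenConj_ne_zero

lemma psi_zpow (i : ℤ) : Ψ ^ i = (-1:ℝ) ^ i * Φ ^ (-i) := by
  rw [psi_eq_neg_inv, show -Φ⁻¹ = (-1) * Φ⁻¹ by ring, mul_zpow, inv_zpow, ← zpow_neg]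

lemma neg_one_zpow_even {i : ℤ} (h : Even i) : ((-1:ℝ)) ^ i = 1 := by
  obtain ⟨t, rfl⟩ := h
  rw [show t + t = 2 * t by ring, zpow_mul]
  norm_num

lemma neg_one_zpow_odd {i : ℤ} (h : Odd i) : ((-1:ℝ)) ^ i = -1 := by
  obtain ⟨t, rfl⟩ := h
  rw [zpow_add₀ (by norm_num : (-1:ℝ) ≠ 0), show 2 * t = t + t by ring,
    ← two_mul, zpow_mul]
  norm_num

lemma psi_zpow_even {i : ℤ} (h : Even i) : Ψ ^ i = Φ ^ (-i) := by
  rw [psi_zpow, neg_one_zpow_even h, one_mul]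

lemma psi_zpow_odd {i : ℤ} (h : Odd i) : Ψ ^ i = -Φ ^ (-i) := by
  rw [psi_zpow, neg_one_zpow_odd h]; ring

lemma phi_zpow_pos (i : ℤ) : (0:ℝ) < Φ ^ i := zpow_pos Real.goldenRatio_pos i

lemma gold_zpow_two : Φ ^ (2:ℤ) = Φ + 1 := by
  rw [show (2:ℤ) = ((2:ℕ):ℤ) by norm_num, zpow_natCast, Real.goldenRatio_sq]

lemma phi_zpow_fib (i : ℤ) : Φ ^ i = Φ ^ (i-1) + Φ ^ (i-2) := by
  have h2 : Φ ^ i = Φ ^ (i-2) * Φ ^ (2:ℤ) := by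
    rw [← zpow_add₀ Real.goldenRatio_ne_zero]; ring_nf
  rw [h2, gold_zpow_two, mul_add, mul_one, ← zpow_add_one₀ Real.goldenRatio_ne_zero]
  ring_nf

lemma zpow_mono {m n : ℤ} (h : m ≤ n) : Φ ^ m ≤ Φ ^ n :=
  zpow_le_zpow_right₀ one_le_gold h

lemma zpow_strict_mono {m n : ℤ} (h : m < n) : Φ ^ m < Φ ^ n :=
  zpow_lt_zpow_right₀ Real.one_lt_goldenRatio h

lemma sqrt5_sq : Real.sqrt 5 * Real.sqrt 5 = 5 :=
  Real.mul_self_sqrt (by norm_num)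

lemma sqrt5_gold : Real.sqrt 5 * Φ = Φ + 2 := by
  unfold Real.goldenRatio
  linear_combination (1/2 : ℝ) * sqrt5_sq

lemma psi_sq_plus : Ψ ^ 2 + 1 = -(Real.sqrt 5 * Ψ) := by
  rw [Real.goldenConj_sq]
  unfold Real.goldenConj
  linear_combination (-(1:ℝ)/2) * sqrt5_sq

lemma gold_sq_plus : Φ ^ 2 + 1 = Real.sqrt 5 * Φ := by
  rw [Real.goldenRatio_sq, sqrt5_gold]; ring

lemma sqrt5_pos : (0:ℝ) < Real.sqrt 5 := Real.sqrt_pos.mpr (by norm_num)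

/-- (φ+2)·F_j = φ^{j+1} + φ²·ψ^{j+1}, ℕ-power version. -/
lemma fib_phi (j : ℕ) :
    (Φ + 2) * (Nat.fib j : ℝ) = Φ ^ (j+1) + Φ ^ 2 * Ψ ^ (j+1) := by
  rw [Real.coe_fib_eq, mul_div_assoc', div_eq_iff (ne_of_gt sqrt5_pos)]
  linear_combination (-(Real.sqrt 5)*Φ*Ψ^j) * Real.goldenRatio_mul_goldenConj
    + (Φ^j - Ψ^j) * sqrt5_gold + (Ψ^j - Φ^j) * sqrt5_sq

/-- φ^{t+1} + ψ^{t+1} = F_{t+2} + F_t. -/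
lemma lucas_eq (t : ℕ) :
    Φ ^ (t+1) + Ψ ^ (t+1) = ((Nat.fib (t+2) + Nat.fib t : ℕ) : ℝ) := by
  push_cast
  rw [Real.coe_fib_eq, Real.coe_fib_eq, ← add_div, eq_comm,
    div_eq_iff (ne_of_gt sqrt5_pos)]
  linear_combination (Φ^t) * gold_sq_plus - (Ψ^t) * psi_sq_plus







noncomputable def Ub (c : ℤ) : ℝ := if Even c then Φ ^ (1-c) else Φ ^ (-c)
noncomputable def Lb (c : ℤ) : ℝ := if Even c then -Φ ^ (-c) else -Φ ^ (1-c)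


lemma Ub_pos (c : ℤ) : 0 < Ub c := by unfold Ub; split <;> exact phi_zpow_pos _
lemma Lb_neg (c : ℤ) : Lb c < 0 := by
  unfold Lb; split <;> simpa using phi_zpow_pos _

lemma Ub_le_pow (c : ℤ) : Ub c ≤ Φ ^ (1-c) := by
  unfold Ub; split
  · exact le_refl _
  · exact zpow_mono (by omega)

lemma pow_le_Ub (c : ℤ) : Φ ^ (-c) ≤ Ub c := by
  unfold Ub; split
  · exact zpow_mono (by omega)
  · exact le_refl _

lemma Ub_mono {c m : ℤ} (h : c ≤ m) : Ub m ≤ Ub c := by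
  rcases eq_or_lt_of_le h with rfl | h'
  · exact le_refl _
  · calc Ub m ≤ Φ ^ (1-m) := Ub_le_pow m
      _ ≤ Φ ^ (-c) := zpow_mono (by omega)
      _ ≤ Ub c := pow_le_Ub c

lemma Lb_le_pow (c : ℤ) : Lb c ≤ -Φ ^ (-c) := by
  unfold Lb; split
  · exact le_refl _
  · exact neg_le_neg (zpow_mono (by omega))

lemma pow_le_Lb (c : ℤ) : -Φ ^ (1-c) ≤ Lb c := by
  unfold Lb; split
  · exact neg_le_neg (zpow_mono (by omega))
  · exact le_refl _

lemma Lb_mono {c m : ℤ} (h : c ≤ m) : Lb c ≤ Lb m := by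
  rcases eq_or_lt_of_le h with rfl | h'
  · exact le_refl _
  · calc Lb c ≤ -Φ ^ (-c) := Lb_le_pow c
      _ ≤ -Φ ^ (1-m) := neg_le_neg (zpow_mono (by omega))
      _ ≤ Lb m := pow_le_Lb m





lemma Ub_even {c : ℤ} (h : Even c) : Ub c = Φ ^ (1-c) := if_pos h
lemma Ub_odd {c : ℤ} (h : Odd c) : Ub c = Φ ^ (-c) := if_neg (Int.not_even_iff_odd.mpr h)
lemma Lb_even {c : ℤ} (h : Even c) : Lb c = -Φ ^ (-c) := if_pos h
lemma Lb_odd {c : ℤ} (h : Odd c) : Lb c = -Φ ^ (1-c) := if_neg (Int.not_even_iff_odd.mpr h)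

lemma psi_sum_bound (P : Finset ℤ) :
    ∀ c : ℤ, (∀ i ∈ P, c ≤ i) →
      Lb c < ∑ i ∈ P, Ψ ^ i ∧ ∑ i ∈ P, Ψ ^ i < Ub c := by
  induction P using Finset.strongInduction with
  | _ s ih =>
  intro c hc
  rcases s.eq_empty_or_nonempty with rfl | hs
  · simpa using ⟨Lb_neg c, Ub_pos c⟩
  · set m := s.min' hs with hm
    have hmem : m ∈ s := s.min'_mem hs
    have hcm : c ≤ m := hc m hmem
    have htail : s.erase m ⊂ s := Finset.erase_ssubset hmem
    have htail_ge : ∀ i ∈ s.erase m, m + 1 ≤ i := by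
      intro i hi
      have h1 := Finset.mem_of_mem_erase hi
      have h2 := Finset.ne_of_mem_erase hi
      have := s.min'_le i h1
      omega
    obtain ⟨hL, hU⟩ := ih _ htail (m+1) htail_ge
    have hsum : ∑ i ∈ s, Ψ ^ i = (∑ i ∈ s.erase m, Ψ ^ i) + Ψ ^ m :=
      (Finset.sum_erase_add s _ hmem).symm
    have hfib : Φ ^ (1-m) = Φ ^ (-m) + Φ ^ (-(m+1)) := by
      have := phi_zpow_fib (1-m)
      rw [show (1-m)-1 = -m by ring, show (1-m)-2 = -(m+1) by ring] at this
      exact this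
    rcases Int.even_or_odd m with he | ho
    · -- m even
      have hpsi : Ψ ^ m = Φ ^ (-m) := psi_zpow_even he
      have hUm1 : Ub (m+1) = Φ ^ (-(m+1)) := Ub_odd (Even.add_one he)
      have hLm1 : Lb (m+1) = -Φ ^ (-m) := by
        rw [Lb_odd (Even.add_one he), show 1-(m+1) = -m by ring]
      constructor
      · have : (0:ℝ) < ∑ i ∈ s, Ψ ^ i := by
          rw [hsum, hpsi]; rw [hLm1] at hL; linarith
        linarith [Lb_neg c]
      · have : ∑ i ∈ s, Ψ ^ i < Ub m := by
          rw [hsum, hpsi, Ub_even he, hfib]; rw [hUm1] at hU; linarith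
        linarith [Ub_mono hcm]
    · -- m odd
      have hpsi : Ψ ^ m = -Φ ^ (-m) := psi_zpow_odd ho
      have hUm1 : Ub (m+1) = Φ ^ (-m) := by
        rw [Ub_even (Odd.add_one ho), show 1-(m+1) = -m by ring]
      have hLm1 : Lb (m+1) = -Φ ^ (-(m+1)) := Lb_even (Odd.add_one ho)
      constructor
      · have : Lb m < ∑ i ∈ s, Ψ ^ i := by
          rw [hsum, hpsi, Lb_odd ho, hfib]; rw [hLm1] at hL; linarith
        linarith [Lb_mono hcm]
      · have : ∑ i ∈ s, Ψ ^ i < 0 := by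
          rw [hsum, hpsi]; rw [hUm1] at hU; linarith
        linarith [Ub_pos c]

lemma phi_sum_lt (N : Finset ℤ) :
    ∀ c : ℤ, (∀ j ∈ N, j ≤ c) → ∑ j ∈ N, Φ ^ j < Φ ^ (c+2) := by
  induction N using Finset.strongInduction with
  | _ s ih =>
  intro c hc
  rcases s.eq_empty_or_nonempty with rfl | hs
  · simpa using phi_zpow_pos (c+2)
  · set m := s.max' hs with hm
    have hmem : m ∈ s := s.max'_mem hs
    have hcm : m ≤ c := hc m hmem
    have htail : s.erase m ⊂ s := Finset.erase_ssubset hmem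
    have htail_le : ∀ i ∈ s.erase m, i ≤ m - 1 := by
      intro i hi
      have h1 := Finset.mem_of_mem_erase hi
      have h2 := Finset.ne_of_mem_erase hi
      have := s.le_max' i h1
      omega
    have hU := ih _ htail (m-1) htail_le
    have hsum : ∑ i ∈ s, Φ ^ i = (∑ i ∈ s.erase m, Φ ^ i) + Φ ^ m :=
      (Finset.sum_erase_add s _ hmem).symm
    have hfib : Φ ^ (m+2) = Φ ^ (m+1) + Φ ^ m := by
      have := phi_zpow_fib (m+2)
      rw [show (m+2)-1 = m+1 by ring, show (m+2)-2 = m by ring] at this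
      exact this
    have h1 : ∑ i ∈ s, Φ ^ i < Φ ^ (m+2) := by
      rw [hsum, hfib]
      have : (m-1)+2 = m+1 := by ring
      rw [this] at hU
      linarith
    calc ∑ i ∈ s, Φ ^ i < Φ ^ (m+2) := h1
      _ ≤ Φ ^ (c+2) := zpow_mono (by omega)

lemma chain_id (e : ℤ) (s : ℕ) :
    Φ ^ (-e) = (∑ t ∈ Finset.range s, Φ ^ (-(e+2*(t:ℤ)+1)))
      + Φ ^ (-(e+2*(s:ℤ)+1)) + Φ ^ (-(e+2*(s:ℤ)+2)) := by
  induction s with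
  | zero =>
    simp only [Finset.range_zero, Finset.sum_empty, Nat.cast_zero, zero_add]
    have := phi_zpow_fib (-e)
    rw [show -e-1 = -(e+2*0+1) by ring, show -e-2 = -(e+2*0+2) by ring] at this
    simpa using this
  | succ k ihk =>
    rw [Finset.sum_range_succ]
    have hfib := phi_zpow_fib (-(e+2*(k:ℤ)+2))
    rw [show -(e+2*(k:ℤ)+2)-1 = -(e+2*((k:ℤ)+1)+1) by ring,
      show -(e+2*(k:ℤ)+2)-2 = -(e+2*((k:ℤ)+1)+2) by ring] at hfib
    push_cast
    rw [ihk, hfib]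
    ring

lemma psi_sum_bound' (P : Finset ℤ) (h : ∀ i ∈ P, (3:ℤ) ≤ i) :
    -Φ^(-2:ℤ) < ∑ i ∈ P, Ψ ^ i ∧ ∑ i ∈ P, Ψ ^ i < Φ^(-3:ℤ) := by
  have hb := psi_sum_bound P 3 h
  rw [Lb_odd (⟨1, by norm_num⟩ : Odd (3:ℤ)), Ub_odd (⟨1, by norm_num⟩ : Odd (3:ℤ))] at hb
  norm_num at hb ⊢
  exact hb





lemma zpow_eq_pow_toNat (x : ℝ) (i : ℤ) (h : 0 ≤ i) : x ^ i = x ^ i.toNat := by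
  rw [← zpow_natCast, Int.toNat_of_nonneg h]

lemma psi_sq_eq : Ψ ^ 2 = Φ ^ (-2:ℤ) := by
  rw [show (Ψ:ℝ) ^ 2 = Ψ ^ ((2:ℕ):ℤ) by rw [zpow_natCast]]
  exact psi_zpow_even (by norm_num)


lemma lucas_sum (P : Finset ℤ) (hP3 : ∀ i ∈ P, 3 ≤ i) :
    (∑ i ∈ P, Φ ^ i) + (∑ i ∈ P, Ψ ^ i)
      = ((∑ i ∈ P, (Nat.fib (i.toNat+1) + Nat.fib (i.toNat-1)) : ℕ) : ℝ) := by
  rw [← Finset.sum_add_distrib]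
  push_cast
  refine Finset.sum_congr rfl ?_
  intro i hi
  have h3 := hP3 i hi
  have hit : (i : ℤ) = (((i.toNat - 1)+1 : ℕ) : ℤ) := by omega
  set t := i.toNat - 1 with htdef
  have ht2 : i.toNat + 1 = t + 2 := by omega
  have hF : Φ ^ i = Φ ^ (t+1) := by rw [hit, zpow_natCast]
  have hP : Ψ ^ i = Ψ ^ (t+1) := by rw [hit, zpow_natCast]
  rw [hF, hP, lucas_eq t, ht2]
  push_cast; ring

lemma core (P N : Finset ℤ) (hP3 : ∀ i ∈ P, 3 ≤ i) (hN2 : ∀ j ∈ N, j ≤ -2)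
    (hBA : ∑ j ∈ N, Φ ^ j = Ψ ^ 2 + ∑ i ∈ P, Ψ ^ i) :
    (1 + Φ + (∑ i ∈ P, Φ ^ i) + (∑ j ∈ N, Φ ^ j)
       = ((3 + ∑ i ∈ P, (Nat.fib (i.toNat+1) + Nat.fib (i.toNat-1)) : ℕ) : ℝ)) ∧
    0 < (Φ+2) * ((1 + ∑ i ∈ P, Nat.fib (i.toNat-1) : ℕ) : ℝ)
        - (1 + Φ + (∑ i ∈ P, Φ ^ i) + (∑ j ∈ N, Φ ^ j)) ∧
    (Φ+2) * ((1 + ∑ i ∈ P, Nat.fib (i.toNat-1) : ℕ) : ℝ)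
        - (1 + Φ + (∑ i ∈ P, Φ ^ i) + (∑ j ∈ N, Φ ^ j)) < 1 := by
  have hconv : ∀ i ∈ P, ∃ t : ℕ, (i : ℤ) = ((t+1 : ℕ) : ℤ) ∧ i.toNat - 1 = t ∧
      i.toNat + 1 = t + 2 := by
    intro i hi
    have h3 := hP3 i hi
    refine ⟨i.toNat - 1, by omega, rfl, by omega⟩
  -- Lucas sum
  have hAL : (∑ i ∈ P, Φ ^ i) + (∑ i ∈ P, Ψ ^ i)
      = ((∑ i ∈ P, (Nat.fib (i.toNat+1) + Nat.fib (i.toNat-1)) : ℕ) : ℝ) := by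
    rw [← Finset.sum_add_distrib]
    push_cast
    refine Finset.sum_congr rfl ?_
    intro i hi
    obtain ⟨t, hit, ht1, ht2⟩ := hconv i hi
    have hΦ : Φ ^ i = Φ ^ (t+1) := by
      rw [hit, zpow_natCast]
    have hΨ : Ψ ^ i = Ψ ^ (t+1) := by
      rw [hit, zpow_natCast]
    rw [hΦ, hΨ, lucas_eq t, ht1, ht2]
    push_cast; ring
  -- fib sum
  have hFP : (Φ+2) * ((∑ i ∈ P, Nat.fib (i.toNat-1) : ℕ) : ℝ)
      = (∑ i ∈ P, Φ ^ i) + Φ ^ 2 * (∑ i ∈ P, Ψ ^ i) := by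
    push_cast
    rw [Finset.mul_sum, Finset.mul_sum, ← Finset.sum_add_distrib]
    refine Finset.sum_congr rfl ?_
    intro i hi
    obtain ⟨t, hit, ht1, ht2⟩ := hconv i hi
    have hΦ : Φ ^ i = Φ ^ (t+1) := by rw [hit, zpow_natCast]
    have hΨ : Ψ ^ i = Ψ ^ (t+1) := by rw [hit, zpow_natCast]
    rw [hΦ, hΨ, ht1, fib_phi t]
  set A := ∑ i ∈ P, Φ ^ i with hA
  set Ab := ∑ i ∈ P, Ψ ^ i with hAb
  set B := ∑ j ∈ N, Φ ^ j with hB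
  have h3 : 1 + Φ + Ψ ^ 2 = 3 := by
    rw [Real.goldenConj_sq]
    have := Real.goldenRatio_add_goldenConj
    linarith
  constructor
  · rw [hBA]
    push_cast
    push_cast at hAL
    linarith [hAL]
  · -- the floor bounds
    have hmexp : (Φ+2) * ((1 + ∑ i ∈ P, Nat.fib (i.toNat-1) : ℕ) : ℝ)
        = (Φ+2) + A + Φ ^ 2 * Ab := by
      push_cast
      push_cast at hFP
      ring_nf
      ring_nf at hFP
      linarith [hFP]
    have hdiff : (Φ+2) * ((1 + ∑ i ∈ P, Nat.fib (i.toNat-1) : ℕ) : ℝ)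
        - (1 + Φ + A + B) = 1 + Φ * Ab - Ψ ^ 2 := by
      rw [hmexp, hBA, Real.goldenRatio_sq]
      ring
    rw [hdiff]
    obtain ⟨hlow, hup⟩ := psi_sum_bound' P hP3
    have hpsisq : Ψ ^ 2 = Φ ^ (-2:ℤ) := psi_sq_eq
    have hmul_up : Φ * Ab < Φ * Φ ^ (-3:ℤ) := by
      exact mul_lt_mul_of_pos_left hup Real.goldenRatio_pos
    have hmul_low : Φ * (-Φ ^ (-2:ℤ)) < Φ * Ab := by
      exact mul_lt_mul_of_pos_left hlow Real.goldenRatio_pos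
    have hid1 : Φ * Φ ^ (-3:ℤ) = Φ ^ (-2:ℤ) := by
      have h := (zpow_add₀ Real.goldenRatio_ne_zero (1:ℤ) (-3:ℤ)).symm
      rw [zpow_one] at h
      rw [h]; norm_num
    have hid2 : Φ * Φ ^ (-2:ℤ) = Φ ^ (-1:ℤ) := by
      have h := (zpow_add₀ Real.goldenRatio_ne_zero (1:ℤ) (-2:ℤ)).symm
      rw [zpow_one] at h
      rw [h]; norm_num
    have hid3 : Φ ^ (-1:ℤ) + Φ ^ (-2:ℤ) = 1 := by
      have := phi_zpow_fib 0
      rw [show (0:ℤ)-1 = -1 by ring, show (0:ℤ)-2 = -2 by ring] at this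
      rw [← this, zpow_zero]
    constructor
    · rw [hpsisq]
      rw [hid1] at hmul_up
      nlinarith [hmul_low, hid2, hid3]
    · rw [hpsisq]
      rw [hid1] at hmul_up
      linarith




lemma exists_fib_interval (k : ℕ) (hk : 1 ≤ k) :
    ∃ j, 2 ≤ j ∧ Nat.fib j ≤ k ∧ k < Nat.fib (j+1) := by
  induction k with
  | zero => omega
  | succ k ihk =>
    rcases Nat.eq_zero_or_pos k with rfl | hkpos
    · exact ⟨2, by norm_num [Nat.fib]⟩
    · obtain ⟨j, hj2, hle, hlt⟩ := ihk hkpos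
      rcases Nat.lt_or_ge (k+1) (Nat.fib (j+1)) with h | h
      · exact ⟨j, hj2, by omega, h⟩
      · have heq : k + 1 = Nat.fib (j+1) := by omega
        refine ⟨j+1, by omega, by omega, ?_⟩
        rw [heq]
        exact Nat.fib_lt_fib_succ (by omega)

theorem star (k : ℕ) : ∃ P N : Finset ℤ, ∃ e : ℤ,
    (∀ i ∈ P, 3 ≤ i) ∧ (∀ i ∈ P, i + 1 ∉ P) ∧
    (∀ i ∈ P, Nat.fib (i.toNat - 1) ≤ k) ∧
    (∑ i ∈ P, Nat.fib (i.toNat - 1)) = k ∧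
    (∀ x ∈ N, x ≤ -2) ∧ (∀ x ∈ N, x + 1 ∉ N) ∧
    (-e) ∈ N ∧ (∀ x ∈ N, -e ≤ x) ∧ Even e ∧
    (∀ q : ℤ, 3 ≤ q → (∀ i ∈ P, i + 2 ≤ q) → e + 1 ≤ q) ∧
    (∑ x ∈ N, Φ ^ x) = Ψ ^ 2 + ∑ i ∈ P, Ψ ^ i := by
  induction k using Nat.strong_induction_on with
  | _ k ih =>
  rcases Nat.eq_zero_or_pos k with rfl | hk
  · refine ⟨∅, {-2}, 2, by simp, by simp, by simp, by simp, ?_, ?_, ?_, ?_, ?_, ?_, ?_⟩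
    · intro x hx; simp at hx; omega
    · intro x hx hcon; simp at hx hcon; omega
    · simp
    · intro x hx; simp at hx; omega
    · exact ⟨1, by norm_num⟩
    · intro q hq _; omega
    · rw [Finset.sum_singleton, Finset.sum_empty, add_zero, psi_sq_eq]
  · obtain ⟨j, hj2, hjle, hjlt⟩ := exists_fib_interval k hk
    have hfibpos : 0 < Nat.fib j := Nat.fib_pos.mpr (by omega)
    set k' := k - Nat.fib j with hk'def
    have hk'lt : k' < k := by omega
    have hfibadd : Nat.fib (j+1) = Nat.fib (j-1) + Nat.fib j := by
      have h := Nat.fib_add_two (n := j-1)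
      have e1 : j - 1 + 2 = j + 1 := by omega
      have e2 : j - 1 + 1 = j := by omega
      rw [e1, e2] at h
      omega
    have hk'fib : k' < Nat.fib (j-1) := by omega
    obtain ⟨P', N', e', hP3, hPadj, hPle, hPsum, hN2, hNadj, heN, hemin, heeven, hinv, hsum⟩ :=
      ih k' hk'lt
    set q : ℤ := (j:ℤ) + 1 with hqdef
    have hq3 : (3:ℤ) ≤ q := by omega
    have hgap : ∀ i ∈ P', i + 2 ≤ q := by
      intro i hi
      have h3 := hP3 i hi
      have hle := hPle i hi
      by_contra hcon
      have hge : j - 1 ≤ i.toNat - 1 := by omega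
      have := Nat.fib_mono hge
      omega
    have heq : e' + 1 ≤ q := hinv q hq3 hgap
    have he2 : 2 ≤ e' := by
      have := hN2 _ heN; omega
    have hqP' : q ∉ P' := fun h => absurd (hgap q h) (by omega)
    have hqtoNat : q.toNat - 1 = j := by omega
    have hNew3 : ∀ i ∈ insert q P', 3 ≤ i := by
      intro i hi
      rcases Finset.mem_insert.mp hi with rfl | h
      · exact hq3
      · exact hP3 i h
    have hNewadj : ∀ i ∈ insert q P', i + 1 ∉ insert q P' := by
      intro i hi hcon
      rcases Finset.mem_insert.mp hi with rfl | h
      · rcases Finset.mem_insert.mp hcon with h' | h'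
        · omega
        · have := hgap _ h'; omega
      · rcases Finset.mem_insert.mp hcon with h' | h'
        · have := hgap _ h; omega
        · exact hPadj i h h'
    have hNewle : ∀ i ∈ insert q P', Nat.fib (i.toNat - 1) ≤ k := by
      intro i hi
      rcases Finset.mem_insert.mp hi with rfl | h
      · rw [hqtoNat]; exact hjle
      · exact le_trans (hPle i h) (by omega)
    have hNewsum : ∑ i ∈ insert q P', Nat.fib (i.toNat - 1) = k := by
      rw [Finset.sum_insert hqP', hqtoNat, hPsum]; omega
    have hNewinv : ∀ q₂ : ℤ, 3 ≤ q₂ → (∀ i ∈ insert q P', i + 2 ≤ q₂) → q + 2 ≤ q₂ :=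
      fun q₂ _ h => h q (Finset.mem_insert_self q P')
    rcases Int.even_or_odd q with hqe | hqo
    · -- q even
      obtain ⟨a, ha⟩ := heeven
      obtain ⟨b, hb⟩ := hqe
      have he'q : e' ≤ q - 2 := by omega
      have hqN' : ∀ x ∈ N', -q + 2 ≤ x := by
        intro x hx
        have := hemin x hx; omega
      have hnotmem : (-q) ∉ N' := fun h => by have := hqN' _ h; omega
      refine ⟨insert q P', insert (-q) N', q, hNew3, hNewadj, hNewle, hNewsum, ?_, ?_, ?_, ?_,
        ⟨b, hb⟩, fun q₂ h1 h2 => by have := hNewinv q₂ h1 h2; omega, ?_⟩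
      · intro x hx
        rcases Finset.mem_insert.mp hx with rfl | h
        · omega
        · exact hN2 x h
      · intro x hx hcon
        rcases Finset.mem_insert.mp hx with rfl | h
        · rcases Finset.mem_insert.mp hcon with h' | h'
          · omega
          · have := hqN' _ h'; omega
        · rcases Finset.mem_insert.mp hcon with h' | h'
          · have := hqN' _ h; omega
          · exact hNadj x h h'
      · exact Finset.mem_insert_self _ _
      · intro x hx
        rcases Finset.mem_insert.mp hx with rfl | h
        · omega
        · have := hqN' x h; omega
      · rw [Finset.sum_insert hnotmem, Finset.sum_insert hqP', hsum,
          psi_zpow_even (⟨b, hb⟩ : Even q)]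
        ring
    · -- q odd
      obtain ⟨a, ha⟩ := heeven
      obtain ⟨b, hb⟩ := hqo
      have hab : a ≤ b := by omega
      set s : ℕ := (b - a).toNat with hsdef
      have hqs : q = e' + 2*(s:ℤ) + 1 := by
        have : ((b-a).toNat : ℤ) = b - a := Int.toNat_of_nonneg (by omega)
        omega
      set C : Finset ℤ := (Finset.range s).image (fun t : ℕ => -(e' + 2*(t:ℤ) + 1)) with hCdef
      have hCmem : ∀ x, x ∈ C ↔ ∃ t : ℕ, t < s ∧ x = -(e' + 2*(t:ℤ) + 1) := by
        intro x
        simp only [hCdef, Finset.mem_image, Finset.mem_range]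
        constructor
        · rintro ⟨t, ht, h⟩; exact ⟨t, ht, h.symm⟩
        · rintro ⟨t, ht, h⟩; exact ⟨t, ht, h.symm⟩
      set E : Finset ℤ := N'.erase (-e') with hEdef
      have hEmem : ∀ x ∈ E, x ∈ N' ∧ -e' + 2 ≤ x := by
        intro x hx
        have hx1 : x ∈ N' := Finset.mem_of_mem_erase hx
        have hx2 : x ≠ -e' := Finset.ne_of_mem_erase hx
        have hx3 := hemin x hx1
        refine ⟨hx1, ?_⟩
        by_contra hcon
        have hxval : x = -e' + 1 := by omega
        have hmem' : -e' + 1 ∈ N' := by rw [show -e' + 1 = x by omega]; exact hx1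
        exact hNadj (-e') heN hmem'
      -- bounds of C
      have hCbnd : ∀ x ∈ C, -(q-2) ≤ x ∧ x ≤ -(e'+1) := by
        intro x hx
        obtain ⟨t, ht, rfl⟩ := (hCmem x).mp hx
        omega
      set NN : Finset ℤ := insert (-(q+1)) (C ∪ E) with hNNdef
      have hNNmem : ∀ x, x ∈ NN ↔ x = -(q+1) ∨ x ∈ C ∨ x ∈ E := by
        intro x
        simp only [hNNdef, Finset.mem_insert, Finset.mem_union]
      refine ⟨insert q P', NN, q+1, hNew3, hNewadj, hNewle, hNewsum, ?_, ?_, ?_, ?_,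
        ⟨b+1, by omega⟩, fun q₂ h1 h2 => by have := hNewinv q₂ h1 h2; omega, ?_⟩
      · -- ≤ -2
        intro x hx
        rcases (hNNmem x).mp hx with rfl | h | h
        · omega
        · have := hCbnd x h; omega
        · have h1 := (hEmem x h).1; exact hN2 x h1
      · -- adjacency
        intro x hx hcon
        rcases (hNNmem x).mp hx with rfl | h | h
        · rcases (hNNmem _).mp hcon with h' | h' | h'
          · omega
          · obtain ⟨t, ht, h''⟩ := (hCmem _).mp h'; omega
          · have := (hEmem _ h').2; omega
        · obtain ⟨t, ht, rfl⟩ := (hCmem x).mp h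
          rcases (hNNmem _).mp hcon with h' | h' | h'
          · omega
          · obtain ⟨u, hu, h''⟩ := (hCmem _).mp h'; omega
          · have := (hEmem _ h').2; omega
        · obtain ⟨hxN', hxge⟩ := hEmem x h
          rcases (hNNmem _).mp hcon with h' | h' | h'
          · omega
          · have := hCbnd _ h'; omega
          · exact hNadj x hxN' (hEmem _ h').1
      · -- min mem
        rw [hNNmem]; left; ring_nf
      · -- min le
        intro x hx
        rcases (hNNmem x).mp hx with rfl | h | h
        · omega
        · have := hCbnd x h; omega
        · have := (hEmem x h).2; omega
      · -- the sum
        have hd1 : -(q+1) ∉ C ∪ E := by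
          intro hcon
          rcases Finset.mem_union.mp hcon with h | h
          · have := hCbnd _ h; omega
          · have := (hEmem _ h).2; omega
        have hd2 : Disjoint C E := by
          rw [Finset.disjoint_left]
          intro x hx hx'
          have := hCbnd _ hx
          have := (hEmem _ hx').2
          omega
        have hCsum : ∑ x ∈ C, Φ ^ x = ∑ t ∈ Finset.range s, Φ ^ (-(e' + 2*(t:ℤ) + 1)) := by
          rw [hCdef]
          exact Finset.sum_image (by intro x _ y _ h; have h' : -(e' + 2*(x:ℤ) + 1) = -(e' + 2*(y:ℤ) + 1) := h; omega)
        have hEsum : ∑ x ∈ E, Φ ^ x = (∑ x ∈ N', Φ ^ x) - Φ ^ (-e') := by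
          have := Finset.sum_erase_add N' (fun x => Φ ^ x) heN
          rw [hEdef]
          linarith [this]
        have hchain := chain_id e' s
        rw [hNNdef, Finset.sum_insert hd1, Finset.sum_union hd2, hCsum, hEsum, hsum,
          Finset.sum_insert hqP', psi_zpow_odd (⟨b, hb⟩ : Odd q)]
        have hq1 : -(e' + 2*(s:ℤ) + 1) = -q := by omega
        have hq2 : -(e' + 2*(s:ℤ) + 2) = -(q+1) := by omega
        rw [hq1, hq2] at hchain
        linarith [hchain]





lemma sum_insert01 (P N : Finset ℤ) (hP3 : ∀ i ∈ P, 3 ≤ i) (hN2 : ∀ x ∈ N, x ≤ -2)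
    (f : ℤ → ℝ) :
    ∑ i ∈ insert 0 (insert 1 (P ∪ N)), f i
      = f 0 + f 1 + (∑ i ∈ P, f i) + (∑ x ∈ N, f x) := by
  have h1 : (1:ℤ) ∉ P ∪ N := by
    intro h
    rcases Finset.mem_union.mp h with h | h
    · have := hP3 _ h; omega
    · have := hN2 _ h; omega
  have h0 : (0:ℤ) ∉ insert 1 (P ∪ N) := by
    intro h
    rcases Finset.mem_insert.mp h with h | h
    · omega
    · rcases Finset.mem_union.mp h with h | h
      · have := hP3 _ h; omega
      · have := hN2 _ h; omega
  have hd : Disjoint P N := by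
    rw [Finset.disjoint_left]
    intro x hx hx'
    have := hP3 _ hx; have := hN2 _ hx'; omega
  rw [Finset.sum_insert h0, Finset.sum_insert h1, Finset.sum_union hd]
  ring

theorem main_forward (n : ℕ) (a : ℤ →₀ ℕ) (hrep : IsPhiRep n a)
    (ha1 : a 1 = 1) (ha0 : a 0 = 1) (ham1 : a (-1) = 0)
    (hadj : ∀ i : ℤ, i ≠ 0 → a i * a (i + 1) = 0) :
    ∃ m : ℕ, 1 ≤ m ∧ (n : ℤ) = ⌊(Φ + 2) * (m : ℝ)⌋ := by
  obtain ⟨hle, hsum⟩ := hrep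
  have hone : ∀ i ∈ a.support, a i = 1 := by
    intro i hi
    have := Finsupp.mem_support_iff.mp hi
    have := hle i
    omega
  have ha2 : a 2 = 0 := by
    have := hadj 1 (by norm_num)
    rw [ha1] at this
    simpa using this
  set P := a.support.filter (fun i => 3 ≤ i) with hPdef
  set N := a.support.filter (fun i => i ≤ -2) with hNdef
  have hP3 : ∀ i ∈ P, (3:ℤ) ≤ i := fun i hi => (Finset.mem_filter.mp hi).2
  have hN2 : ∀ x ∈ N, x ≤ (-2:ℤ) := fun x hx => (Finset.mem_filter.mp hx).2
  have hsupp : a.support = insert 0 (insert 1 (P ∪ N)) := by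
    ext x
    constructor
    · intro hx
      have hcase : 3 ≤ x ∨ x = 2 ∨ x = 1 ∨ x = 0 ∨ x = -1 ∨ x ≤ -2 := by omega
      simp only [Finset.mem_insert, Finset.mem_union]
      rcases hcase with h | h | h | h | h | h
      · right; right; left; exact Finset.mem_filter.mpr ⟨hx, h⟩
      · exfalso; rw [Finsupp.mem_support_iff, h, ha2] at hx; exact hx rfl
      · right; left; exact h
      · left; exact h
      · exfalso; rw [Finsupp.mem_support_iff, h, ham1] at hx; exact hx rfl
      · right; right; right; exact Finset.mem_filter.mpr ⟨hx, h⟩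
    · intro hx
      simp only [Finset.mem_insert, Finset.mem_union] at hx
      rcases hx with rfl | rfl | h | h
      · exact Finsupp.mem_support_iff.mpr (by rw [ha0]; norm_num)
      · exact Finsupp.mem_support_iff.mpr (by rw [ha1]; norm_num)
      · exact (Finset.mem_filter.mp h).1
      · exact (Finset.mem_filter.mp h).1
  have hval : (n:ℝ) = 1 + Φ + (∑ i ∈ P, Φ ^ i) + (∑ x ∈ N, Φ ^ x) := by
    rw [hsum]
    have : ∑ i ∈ a.support, (a i : ℝ) * phi ^ i = ∑ i ∈ a.support, Φ ^ i := by
      refine Finset.sum_congr rfl ?_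
      intro i hi
      rw [hone i hi, phi_eq]
      norm_num
    rw [this, hsupp, sum_insert01 P N hP3 hN2, zpow_zero, zpow_one]
    try ring
  -- integrality pinch
  set K : ℕ := ∑ i ∈ P, (Nat.fib (i.toNat+1) + Nat.fib (i.toNat-1)) with hKdef
  have hAL := lucas_sum P hP3
  set Ab := ∑ i ∈ P, Ψ ^ i with hAbdef
  set B := ∑ x ∈ N, Φ ^ x with hBdef
  have hBlt : B < 1 := by
    have h := phi_sum_lt N (-2) hN2
    rw [show (-2:ℤ)+2 = 0 by norm_num, zpow_zero] at h
    exact h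
  have hBge : 0 ≤ B := Finset.sum_nonneg (fun x _ => le_of_lt (phi_zpow_pos x))
  obtain ⟨hAblow, hAbup⟩ := psi_sum_bound' P hP3
  have hphi1 : Φ ^ (-1:ℤ) = Φ ^ (-2:ℤ) + Φ ^ (-3:ℤ) := by
    have h := phi_zpow_fib (-1)
    rw [show (-1:ℤ)-1 = -2 by norm_num, show (-1:ℤ)-2 = -3 by norm_num] at h
    exact h
  have hphi1lt : Φ ^ (-1:ℤ) < 1 := by
    have := zpow_strict_mono (show (-1:ℤ) < 0 by norm_num)
    rwa [zpow_zero] at this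
  have hcz : (((n:ℤ) - 3 - K : ℤ) : ℝ) = B - Ab - Ψ ^ 2 := by
    push_cast
    have h3 : (1:ℝ) + Φ + Ψ ^ 2 = 3 := by
      rw [Real.goldenConj_sq]; have := Real.goldenRatio_add_goldenConj; linarith
    have hALr : (∑ i ∈ P, Φ ^ i) = (K:ℝ) - Ab := by
      rw [hKdef]
      linarith [hAL]
    rw [hval, hALr]
    linear_combination h3
  have hpin : ((n:ℤ) - 3 - K : ℤ) = 0 := by
    have hr : (-1:ℝ) < (((n:ℤ) - 3 - K : ℤ) : ℝ) ∧ (((n:ℤ) - 3 - K : ℤ) : ℝ) < 1 := by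
      rw [hcz, psi_sq_eq]
      constructor
      · nlinarith [hphi1, hphi1lt]
      · nlinarith
    have h1 : (-1:ℤ) < (n:ℤ) - 3 - K := by exact_mod_cast hr.1
    have h2 : ((n:ℤ) - 3 - K) < 1 := by exact_mod_cast hr.2
    omega
  have hBA : B = Ψ ^ 2 + Ab := by
    have : (((n:ℤ) - 3 - K : ℤ) : ℝ) = 0 := by rw [hpin]; norm_num
    rw [hcz] at this
    linarith
  obtain ⟨hvK, hlow, hup⟩ := core P N hP3 hN2 hBA
  set m : ℕ := 1 + ∑ i ∈ P, Nat.fib (i.toNat-1) with hmdef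
  refine ⟨m, by omega, ?_⟩
  symm
  rw [Int.floor_eq_iff]
  constructor
  · push_cast
    linarith [hval, hlow]
  · push_cast
    linarith [hval, hup]

theorem main_reverse (n : ℕ) (m : ℕ) (hm : 1 ≤ m) (hn : (n:ℤ) = ⌊(Φ + 2) * (m : ℝ)⌋) :
    ∃ a : ℤ →₀ ℕ, IsPhiRep n a ∧ a 1 = 1 ∧ a 0 = 1 ∧ a (-1) = 0 ∧
      ∀ i : ℤ, i ≠ 0 → a i * a (i + 1) = 0 := by
  obtain ⟨P, N, e, hP3, hPadj, _, hPsum, hN2, hNadj, heN, hemin, heeven, hinv, hsum⟩ :=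
    star (m - 1)
  obtain ⟨hvK, hlow, hup⟩ := core P N hP3 hN2 hsum
  have hm' : 1 + ∑ i ∈ P, Nat.fib (i.toNat-1) = m := by omega
  rw [hm'] at hlow hup
  set v : ℝ := 1 + Φ + (∑ i ∈ P, Φ ^ i) + (∑ x ∈ N, Φ ^ x) with hvdef
  set K : ℕ := 3 + ∑ i ∈ P, (Nat.fib (i.toNat+1) + Nat.fib (i.toNat-1)) with hKdef
  have hKv : (K : ℝ) = v := by rw [hKdef, hvK]
  have hfloor : ⌊(Φ + 2) * (m : ℝ)⌋ = (K : ℤ) := by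
    rw [Int.floor_eq_iff]
    constructor
    · push_cast
      linarith [hKv, hlow]
    · push_cast
      linarith [hKv, hup]
  have hnK : n = K := by
    have : (n:ℤ) = (K:ℤ) := by rw [hn, hfloor]
    exact_mod_cast this
  have hnv : (n:ℝ) = v := by rw [hnK, hvK]
  -- build the Finsupp
  set S : Finset ℤ := insert 0 (insert 1 (P ∪ N)) with hSdef
  have hmemS : ∀ x : ℤ, x ∈ S ↔ (x = 0 ∨ x = 1 ∨ x ∈ P ∨ x ∈ N) := by
    intro x
    simp only [hSdef, Finset.mem_insert, Finset.mem_union]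
  set a : ℤ →₀ ℕ := ⟨S, fun i => if i ∈ S then 1 else 0, by
    intro i
    show i ∈ S ↔ (if i ∈ S then 1 else 0) ≠ 0
    split_ifs with h <;> simp [h]⟩ with hadef
  have haval : ∀ i, a i = if i ∈ S then 1 else 0 := fun i => rfl
  have hasupp : a.support = S := rfl
  refine ⟨a, ⟨?_, ?_⟩, ?_, ?_, ?_, ?_⟩
  · intro i; rw [haval]; split <;> norm_num
  · rw [hasupp, hnv, hvdef]
    have : ∑ i ∈ S, (a i : ℝ) * phi ^ i = ∑ i ∈ S, Φ ^ i := by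
      refine Finset.sum_congr rfl ?_
      intro i hi
      rw [haval, if_pos hi, phi_eq]
      norm_num
    rw [this, hSdef, sum_insert01 P N hP3 hN2, zpow_zero, zpow_one]
    try ring
  · rw [haval, if_pos (by rw [hmemS]; tauto)]
  · rw [haval, if_pos (by rw [hmemS]; tauto)]
  · rw [haval, if_neg]
    rw [hmemS]
    push_neg
    refine ⟨by norm_num, by norm_num, ?_, ?_⟩
    · intro h; have := hP3 _ h; omega
    · intro h; have := hN2 _ h; omega
  · intro i hi
    rcases em (i ∈ S) with h | h
    · rcases em (i + 1 ∈ S) with h' | h'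
      · exfalso
        rcases (hmemS i).mp h with rfl | rfl | hP | hN
        · exact hi rfl
        · rcases (hmemS 2).mp h' with h'' | h'' | h'' | h''
          · omega
          · omega
          · have := hP3 _ h''; omega
          · have := hN2 _ h''; omega
        · rcases (hmemS _).mp h' with h'' | h'' | h'' | h''
          · have := hP3 _ hP; omega
          · have := hP3 _ hP; omega
          · exact hPadj _ hP h''
          · have := hP3 _ hP; have := hN2 _ h''; omega
        · rcases (hmemS _).mp h' with h'' | h'' | h'' | h''
          · have := hN2 _ hN; omega
          · have := hN2 _ hN; omega
          · have := hN2 _ hN; have := hP3 _ h''; omega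
          · exact hNadj _ hN h''
      · rw [haval (i+1), if_neg h', mul_zero]
    · rw [haval i, if_neg h, zero_mul]


end DVL

/-- For `n ≥ 1`, `n` admits a Dekking–Van Loon expansion that differs from its
canonical φ-representation (i.e., a finite φ-representation with digits 1 at
positions 1 and 0, digit 0 at position -1, and no other adjacency) iff
`n = ⌊(φ+2)·m⌋` for some integer `m ≥ 1`. -/
theorem dvl_differs_iff
    (n : ℕ) (hn : 1 ≤ n) :
    (∃ a : ℤ →₀ ℕ, IsPhiRep n a ∧ a 1 = 1 ∧ a 0 = 1 ∧ a (-1) = 0 ∧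
        ∀ i : ℤ, i ≠ 0 → a i * a (i + 1) = 0) ↔
      ∃ m : ℕ, 1 ≤ m ∧ (n : ℤ) = ⌊(phi + 2) * (m : ℝ)⌋ := by
  constructor
  · rintro ⟨a, hrep, h1, h0, hm1, hadj⟩
    exact DVL.main_forward n a hrep h1 h0 hm1 hadj
  · rintro ⟨m, hm, hnm⟩
    exact DVL.main_reverse n m hm hnm
end
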